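/- Let A be a k×n real matrix with orthonormal rows, and let L = diag(ℓ_1,…,ℓ_n) with all ℓ_j > 0. Then the operator norm of (A L² Aᵀ)^{-1/2} satisfies ‖(A L² Aᵀ)^{-1/2}‖_op ≤ ∑_{j=1}^n (∑_{i=1}^k a_{j,i}²) ℓ_j^{-1}, where a_{j,i} denotes the (i,j) entry of A. -/

import Mathlib

open Matrix

/-- Let `A` be a `k×n` real matrix with orthonormal rows and `L = diag(ℓ)` with all
`ℓ_j > 0`. If `S` is the (symmetric positive definite) square root of `A L² Aᵀ`, then
`‖S⁻¹‖_op ≤ ∑_j (∑_i a_{j,i}²) ℓ_j⁻¹`, where the operator norm is the Euclidean one. -/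
theorem opNorm_inv_sqrt_ALLAT_le (k n : ℕ) (A : Matrix (Fin k) (Fin n) ℝ)
    (hA : A * Aᵀ = 1) (ℓ : Fin n → ℝ) (hℓ : ∀ j, 0 < ℓ j)
    (S : Matrix (Fin k) (Fin k) ℝ) (hSsymm : S.IsSymm) (hSpos : S.PosDef)
    (hS : S * S = A * (Matrix.diagonal ℓ) ^ 2 * Aᵀ) :
    ‖Matrix.toEuclideanCLM (𝕜 := ℝ) S⁻¹‖ ≤ ∑ j, (∑ i, (A i j) ^ 2) * (ℓ j)⁻¹ := by
  set C := ∑ j, (∑ i, (A i j) ^ 2) * (ℓ j)⁻¹ with hCdef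
  have hC0 : 0 ≤ C := Finset.sum_nonneg fun j _ =>
    mul_nonneg (Finset.sum_nonneg fun i _ => sq_nonneg _) (inv_nonneg.2 (hℓ j).le)
  have hdet : IsUnit S.det := isUnit_iff_ne_zero.mpr hSpos.det_pos.ne'
  have adj : ∀ {m p : ℕ} (M : Matrix (Fin m) (Fin p) ℝ) (u : Fin m → ℝ) (v : Fin p → ℝ),
      u ⬝ᵥ (M *ᵥ v) = (Mᵀ *ᵥ u) ⬝ᵥ v := by
    intro m p M u v
    rw [dotProduct_mulVec, Matrix.mulVec_transpose]
  -- key inequality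
  have key : ∀ y : Fin k → ℝ,
      Real.sqrt (∑ i, y i ^ 2) ≤ C * Real.sqrt (∑ i, (S *ᵥ y) i ^ 2) := by
    intro y
    by_cases hy : y = 0
    · subst hy
      simp only [Pi.zero_apply, ne_eq, OfNat.ofNat_ne_zero, not_false_eq_true, zero_pow,
        Finset.sum_const_zero, Real.sqrt_zero]
      positivity
    set w : Fin n → ℝ := Aᵀ *ᵥ y with hw
    set c : Fin n → ℝ := fun j => w j ^ 2 with hc
    have hc0 : ∀ j, 0 ≤ c j := fun j => sq_nonneg _
    set N := ∑ i, y i ^ 2 with hNdef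
    have hN0 : 0 < N := by
      obtain ⟨i, hi⟩ := Function.ne_iff.mp hy
      exact Finset.sum_pos' (fun i _ => sq_nonneg _)
        ⟨i, Finset.mem_univ i, pow_two_pos_of_ne_zero hi⟩
    -- ∑ c = N
    have hsum_c : ∑ j, c j = N := by
      have h1 : ∑ j, c j = y ⬝ᵥ ((A * Aᵀ) *ᵥ y) := by
        rw [← Matrix.mulVec_mulVec, adj A y (Aᵀ *ᵥ y)]
        simp [hc, hw, dotProduct, sq]
      rw [h1, hA, Matrix.one_mulVec]
      simp [hNdef, dotProduct, sq]
    -- q = ∑ c ℓ²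
    set q := ∑ i, (S *ᵥ y) i ^ 2 with hqdef
    have hq : q = ∑ j, c j * (ℓ j) ^ 2 := by
      have h1 : q = (S *ᵥ y) ⬝ᵥ (S *ᵥ y) := by
        simp [hqdef, dotProduct, sq]
      rw [h1, adj S (S *ᵥ y) y, hSsymm.eq, Matrix.mulVec_mulVec, hS,
        dotProduct_comm, ← Matrix.mulVec_mulVec, ← Matrix.mulVec_mulVec,
        adj A y _, Matrix.diagonal_pow, ← hw]
      simp only [dotProduct, Matrix.mulVec_diagonal, Pi.pow_apply]
      exact Finset.sum_congr rfl fun j _ => by simp [hc]; ring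
    have hq0 : 0 ≤ q := Finset.sum_nonneg fun i _ => sq_nonneg _
    -- Cauchy-Schwarz componentwise: c j ≤ (∑ i, A i j ^ 2) * N
    have hcle : ∀ j, c j ≤ (∑ i, A i j ^ 2) * N := by
      intro j
      have : w j = ∑ i, A i j * y i := by
        simp [hw, Matrix.mulVec, dotProduct]
      rw [hc]
      simp only [this]
      exact Finset.sum_mul_sq_le_sq_mul_sq Finset.univ (fun i => A i j) y
    set P := ∑ j, c j * ℓ j with hPdef
    set R := ∑ j, c j * (ℓ j)⁻¹ with hRdef
    have hP0 : 0 ≤ P := Finset.sum_nonneg fun j _ => mul_nonneg (hc0 j) (hℓ j).le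
    have hR0 : 0 ≤ R := Finset.sum_nonneg fun j _ => mul_nonneg (hc0 j) (inv_nonneg.2 (hℓ j).le)
    -- R ≤ C * N
    have hRCN : R ≤ C * N := by
      rw [hRdef, hCdef, Finset.sum_mul]
      exact Finset.sum_le_sum fun j _ => by
        rw [mul_right_comm]
        exact mul_le_mul_of_nonneg_right (hcle j) (inv_nonneg.2 (hℓ j).le)
    -- CS1 : N^2 ≤ P * R
    have hCS1 : N ^ 2 ≤ P * R := by
      have h := Finset.sum_mul_sq_le_sq_mul_sq Finset.univ
        (fun j => Real.sqrt (c j * ℓ j)) (fun j => Real.sqrt (c j * (ℓ j)⁻¹))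
      have e1 : ∀ j : Fin n, Real.sqrt (c j * ℓ j) * Real.sqrt (c j * (ℓ j)⁻¹) = c j := by
        intro j
        rw [← Real.sqrt_mul (mul_nonneg (hc0 j) (hℓ j).le)]
        have : c j * ℓ j * (c j * (ℓ j)⁻¹) = c j ^ 2 := by
          rw [mul_mul_mul_comm, mul_inv_cancel₀ (hℓ j).ne', mul_one, sq]
        rw [this, Real.sqrt_sq (hc0 j)]
      have e2 : ∀ j : Fin n, Real.sqrt (c j * ℓ j) ^ 2 = c j * ℓ j := fun j =>
        Real.sq_sqrt (mul_nonneg (hc0 j) (hℓ j).le)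
      have e3 : ∀ j : Fin n, Real.sqrt (c j * (ℓ j)⁻¹) ^ 2 = c j * (ℓ j)⁻¹ := fun j =>
        Real.sq_sqrt (mul_nonneg (hc0 j) (inv_nonneg.2 (hℓ j).le))
      simp only [e1, e2, e3] at h
      rw [← hsum_c] at *
      exact h
    -- CS2 : P^2 ≤ N * q
    have hCS2 : P ^ 2 ≤ N * q := by
      have h := Finset.sum_mul_sq_le_sq_mul_sq Finset.univ
        (fun j => Real.sqrt (c j)) (fun j => Real.sqrt (c j) * ℓ j)
      have e1 : ∀ j : Fin n, Real.sqrt (c j) * (Real.sqrt (c j) * ℓ j) = c j * ℓ j := by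
        intro j
        rw [← mul_assoc, Real.mul_self_sqrt (hc0 j)]
      have e2 : ∀ j : Fin n, Real.sqrt (c j) ^ 2 = c j := fun j => Real.sq_sqrt (hc0 j)
      have e3 : ∀ j : Fin n, (Real.sqrt (c j) * ℓ j) ^ 2 = c j * ℓ j ^ 2 := by
        intro j
        rw [mul_pow, Real.sq_sqrt (hc0 j)]
      simp only [e1, e2, e3] at h
      rw [hPdef, hq, ← hsum_c]
      exact h
    -- combine: N ≤ C^2 * q
    have h1 : N ≤ C * P := by
      have : N * N ≤ (C * P) * N := by nlinarith [mul_le_mul_of_nonneg_left hRCN hP0]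
      exact le_of_mul_le_mul_right this hN0
    have h2 : N ≤ C ^ 2 * q := by
      have hNsq : N ^ 2 ≤ (C * P) ^ 2 := by
        apply pow_le_pow_left₀ hN0.le h1
      have : N * N ≤ (C ^ 2 * q) * N := by nlinarith [mul_le_mul_of_nonneg_left hCS2 (sq_nonneg C)]
      exact le_of_mul_le_mul_right this hN0
    calc Real.sqrt N ≤ Real.sqrt (C ^ 2 * q) := Real.sqrt_le_sqrt h2
      _ = C * Real.sqrt q := by
          rw [Real.sqrt_mul (sq_nonneg C), Real.sqrt_sq hC0]
  -- wrap up
  refine ContinuousLinearMap.opNorm_le_bound _ hC0 fun x => ?_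
  set x' : Fin k → ℝ := WithLp.equiv 2 _ x with hx'
  set y : Fin k → ℝ := S⁻¹ *ᵥ x' with hy
  have hSy : S *ᵥ y = x' := by
    rw [hy, Matrix.mulVec_mulVec, Matrix.mul_nonsing_inv S hdet, Matrix.one_mulVec]
  have happ : ∀ i, (Matrix.toEuclideanCLM (𝕜 := ℝ) S⁻¹ x) i = y i := by
    intro i
    have := congrFun (Matrix.ofLp_toEuclideanCLM (𝕜 := ℝ) S⁻¹ x) i
    exact this
  rw [EuclideanSpace.norm_eq, EuclideanSpace.norm_eq]
  simp only [happ, Real.norm_eq_abs, sq_abs]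
  calc Real.sqrt (∑ i, y i ^ 2) ≤ C * Real.sqrt (∑ i, (S *ᵥ y) i ^ 2) := key y
    _ = C * Real.sqrt (∑ i, x' i ^ 2) := by rw [hSy]
    _ = C * Real.sqrt (∑ i, x i ^ 2) := rfl
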